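/- With the recurrence D_{i+1} = 12 D_i √(δ_i), δ_i = D_i/Z_i, Z_{i+1} = D_i/√(δ_i), D₀ = 3εΔ, the closed form D_i = D₀ · ∏_{j=0}^{i-1} 12√(δ_j) holds, and for ε = 100^{-√(ln Δ)}/(100K), K ≥ 1, and 5 ≤ i ≤ ⌈√(ln Δ)⌉, one has D_i ≤ 12^{i²/2} · 10^{-i√(ln Δ)} · Δ. -/

import Mathlib

/-- Closed form `D_i = D₀·∏_{j<i} 12√(δ_j)`, and for `ε = 100^{-√(ln Δ)}/(100K)` and
`5 ≤ i ≤ ⌈√(ln Δ)⌉`, the bound `D_i ≤ 12^{i²/2}·10^{-i√(ln Δ)}·Δ`. -/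
theorem stmt_12 (Δ K ε : ℝ) (hΔ : Real.exp 25 < Δ) (hK : 1 ≤ K)
    (hε : ε = (100 : ℝ) ^ (-Real.sqrt (Real.log Δ)) / (100 * K))
    (D Z : ℕ → ℝ) (hD0 : D 0 = 3 * ε * Δ) (hZ0 : Z 0 = Δ / 2)
    (hD : ∀ i, D (i + 1) = 12 * D i * Real.sqrt (D i / Z i))
    (hZ : ∀ i, Z (i + 1) = D i / Real.sqrt (D i / Z i)) :
    (∀ i, D i = D 0 * ∏ j ∈ Finset.range i, 12 * Real.sqrt (D j / Z j)) ∧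
    (∀ i : ℕ, 5 ≤ i → i ≤ ⌈Real.sqrt (Real.log Δ)⌉₊ →
      D i ≤ (12 : ℝ) ^ ((i : ℝ) ^ 2 / 2) *
        (10 : ℝ) ^ (-(i : ℝ) * Real.sqrt (Real.log Δ)) * Δ) := by
  have hΔ0 : (0:ℝ) < Δ := lt_trans (Real.exp_pos 25) hΔ
  set s := Real.sqrt (Real.log Δ) with hs_def
  have hs0 : 0 ≤ s := Real.sqrt_nonneg _
  have hε0 : 0 < ε := by
    rw [hε]
    have h100 : (0:ℝ) < (100:ℝ) ^ (-s) := Real.rpow_pos_of_pos (by norm_num) _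
    positivity
  -- ε ≤ 100^(-s)/100
  have hεle0 : ε ≤ (100:ℝ) ^ (-s) / 100 := by
    rw [hε]
    have h100 : (0:ℝ) < (100:ℝ) ^ (-s) := Real.rpow_pos_of_pos (by norm_num) _
    apply div_le_div_of_nonneg_left h100.le (by norm_num)
    nlinarith
  have hε1 : ε ≤ 1 / 100 := by
    have : (100:ℝ) ^ (-s) ≤ 1 :=
      Real.rpow_le_one_of_one_le_of_nonpos (by norm_num) (by linarith)
    calc ε ≤ (100:ℝ) ^ (-s) / 100 := hεle0
    _ ≤ 1 / 100 := by linarith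
  -- √ε ≤ 10^(-s-1)
  have hsqrtε : Real.sqrt ε ≤ (10:ℝ) ^ (-s - 1) := by
    have h1 : ε ≤ ((10:ℝ) ^ (-s - 1)) ^ 2 := by
      have : ((10:ℝ) ^ (-s - 1)) ^ 2 = (10:ℝ) ^ ((-s-1) * 2) := by
        rw [← Real.rpow_natCast ((10:ℝ) ^ (-s-1)) 2, ← Real.rpow_mul (by norm_num)]
        norm_num
      rw [this]
      have h2 : (100:ℝ) ^ (-s) / 100 = (10:ℝ) ^ ((-s-1)*2) := by
        have : (100:ℝ) ^ (-s) = (10:ℝ) ^ (-(2*s)) := by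
          rw [show (100:ℝ) = (10:ℝ) ^ (2:ℝ) by norm_num, ← Real.rpow_mul (by norm_num)]
          ring_nf
        rw [this, show ((-s-1)*2 : ℝ) = -(2*s) + (-2) by ring,
          Real.rpow_add (by norm_num),
          show ((-2:ℝ)) = ((-2:ℤ):ℝ) by norm_num, Real.rpow_intCast]
        norm_num
        ring
      rw [← h2]; exact hεle0
    calc Real.sqrt ε ≤ Real.sqrt (((10:ℝ) ^ (-s - 1)) ^ 2) := Real.sqrt_le_sqrt h1
    _ = (10:ℝ) ^ (-s - 1) := Real.sqrt_sq (Real.rpow_pos_of_pos (by norm_num) _).le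
  -- positivity of D and Z
  have hpos : ∀ i, 0 < D i ∧ 0 < Z i := by
    intro i
    induction i with
    | zero =>
      constructor
      · rw [hD0]; positivity
      · rw [hZ0]; positivity
    | succ n ih =>
      obtain ⟨hd, hz⟩ := ih
      have ht : 0 < Real.sqrt (D n / Z n) := Real.sqrt_pos.mpr (div_pos hd hz)
      exact ⟨by rw [hD n]; positivity, by rw [hZ n]; positivity⟩
  -- δ formula
  have hδ : ∀ i, D i / Z i = 6 * ε * 12 ^ i := by
    intro i
    induction i with
    | zero =>
      rw [hD0, hZ0]
      field_simp
      ring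
    | succ n ih =>
      have hd := (hpos n).1
      have hz := (hpos n).2
      have hδpos : 0 < D n / Z n := div_pos hd hz
      have ht : 0 < Real.sqrt (D n / Z n) := Real.sqrt_pos.mpr hδpos
      have key : (12 * D n * Real.sqrt (D n / Z n)) / (D n / Real.sqrt (D n / Z n))
          = 12 * (Real.sqrt (D n / Z n) * Real.sqrt (D n / Z n)) := by
        have h1 : Real.sqrt (D n) * Real.sqrt (D n) = D n := Real.mul_self_sqrt hd.le
        have h2 : Real.sqrt (Z n) * Real.sqrt (Z n) = Z n := Real.mul_self_sqrt hz.le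
        field_simp
      rw [hD n, hZ n, key, Real.mul_self_sqrt hδpos.le, ih, pow_succ]
      ring
  -- closed form
  have hclosed : ∀ i, D i = D 0 * ∏ j ∈ Finset.range i, (12 * Real.sqrt (D j / Z j)) := by
    intro i
    induction i with
    | zero => simp
    | succ n ih =>
      rw [Finset.prod_range_succ, ← mul_assoc, ← ih, hD n]
      ring
  refine ⟨hclosed, ?_⟩
  -- the key step inequality
  have hstep : ∀ n : ℕ, 12 * Real.sqrt (6 * ε * 12 ^ n)
      ≤ (12:ℝ) ^ ((n:ℝ) + 1/2) * (10:ℝ) ^ (-s) := by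
    intro n
    have h12n : Real.sqrt ((12:ℝ) ^ n) = (12:ℝ) ^ ((n:ℝ)/2) := by
      rw [Real.sqrt_eq_rpow, ← Real.rpow_natCast (12:ℝ) n, ← Real.rpow_mul (by norm_num)]
      ring_nf
    have hsplit : Real.sqrt (6 * ε * 12 ^ n)
        = Real.sqrt 6 * Real.sqrt ε * (12:ℝ) ^ ((n:ℝ)/2) := by
      rw [Real.sqrt_mul (by positivity), Real.sqrt_mul (by norm_num), h12n]
    rw [hsplit]
    have h6 : Real.sqrt 6 ≤ 5/2 := by
      rw [show (5/2:ℝ) = Real.sqrt ((5/2)^2) from (Real.sqrt_sq (by norm_num)).symm]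
      apply Real.sqrt_le_sqrt; norm_num
    have h10s : (10:ℝ) ^ (-s - 1) = (10:ℝ) ^ (-s) / 10 := by
      rw [show (-s-1:ℝ) = -s + (-1) by ring, Real.rpow_add (by norm_num)]
      rw [Real.rpow_neg_one]
      ring
    have hpow12 : (12:ℝ) ^ ((n:ℝ) + 1/2) = (12:ℝ) ^ ((n:ℝ)/2) * (12:ℝ) ^ ((n:ℝ)/2 + 1/2) := by
      rw [← Real.rpow_add (by norm_num)]
      ring_nf
    have hhalf : (12:ℝ) ^ ((1:ℝ)/2) ≤ (12:ℝ) ^ ((n:ℝ)/2 + 1/2) := by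
      apply Real.rpow_le_rpow_of_exponent_le (by norm_num)
      have : (0:ℝ) ≤ (n:ℝ) := Nat.cast_nonneg n
      linarith
    have hsqrt12 : (12:ℝ) ^ ((1:ℝ)/2) = Real.sqrt 12 := by
      rw [Real.sqrt_eq_rpow]
    have h3 : (3:ℝ) ≤ Real.sqrt 12 := by
      rw [show (3:ℝ) = Real.sqrt 9 from (Real.sqrt_eq_iff_eq_sq (by norm_num) (by norm_num)).mpr (by norm_num) |>.symm]
      apply Real.sqrt_le_sqrt; norm_num
    have hp12 : (0:ℝ) < (12:ℝ) ^ ((n:ℝ)/2) := Real.rpow_pos_of_pos (by norm_num) _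
    have hp10 : (0:ℝ) < (10:ℝ) ^ (-s) := Real.rpow_pos_of_pos (by norm_num) _
    have hsε : Real.sqrt ε ≤ (10:ℝ) ^ (-s) / 10 := by rw [← h10s]; exact hsqrtε
    calc 12 * (Real.sqrt 6 * Real.sqrt ε * (12:ℝ) ^ ((n:ℝ)/2))
        ≤ 12 * ((5/2) * ((10:ℝ) ^ (-s) / 10) * (12:ℝ) ^ ((n:ℝ)/2)) := by
          apply mul_le_mul_of_nonneg_left _ (by norm_num)
          apply mul_le_mul_of_nonneg_right _ hp12.le
          apply mul_le_mul h6 hsε (Real.sqrt_nonneg _) (by norm_num)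
      _ = 3 * (12:ℝ) ^ ((n:ℝ)/2) * (10:ℝ) ^ (-s) := by ring
      _ ≤ (12:ℝ) ^ ((n:ℝ)/2 + 1/2) * (12:ℝ) ^ ((n:ℝ)/2) * (10:ℝ) ^ (-s) := by
          apply mul_le_mul_of_nonneg_right _ hp10.le
          apply mul_le_mul_of_nonneg_right _ hp12.le
          calc (3:ℝ) ≤ Real.sqrt 12 := h3
            _ = (12:ℝ) ^ ((1:ℝ)/2) := hsqrt12.symm
            _ ≤ (12:ℝ) ^ ((n:ℝ)/2 + 1/2) := hhalf
      _ = (12:ℝ) ^ ((n:ℝ) + 1/2) * (10:ℝ) ^ (-s) := by rw [hpow12]; ring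
  -- main bound by induction, for all i
  have hmain : ∀ i : ℕ, D i ≤ (12:ℝ) ^ ((i:ℝ)^2/2) * (10:ℝ) ^ (-(i:ℝ) * s) * Δ := by
    intro i
    induction i with
    | zero =>
      simp only [Nat.cast_zero, ne_eq, OfNat.ofNat_ne_zero, not_false_eq_true, zero_pow,
        zero_div, Real.rpow_zero, neg_zero, zero_mul, one_mul, hD0]
      nlinarith
    | succ n ih =>
      have hd := (hpos n).1
      have ht0 : 0 ≤ Real.sqrt (D n / Z n) := Real.sqrt_nonneg _
      have hBpos : 0 ≤ (12:ℝ) ^ ((n:ℝ)^2/2) * (10:ℝ) ^ (-(n:ℝ) * s) * Δ := by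
        have := Real.rpow_pos_of_pos (show (0:ℝ) < 12 by norm_num) ((n:ℝ)^2/2)
        have := Real.rpow_pos_of_pos (show (0:ℝ) < 10 by norm_num) (-(n:ℝ) * s)
        positivity
      have step1 : D (n+1) ≤ ((12:ℝ) ^ ((n:ℝ)^2/2) * (10:ℝ) ^ (-(n:ℝ) * s) * Δ)
          * (12 * Real.sqrt (6 * ε * 12 ^ n)) := by
        rw [hD n, hδ n]
        have h12t : 0 ≤ 12 * Real.sqrt (6 * ε * 12 ^ n) := by positivity
        calc 12 * D n * Real.sqrt (6 * ε * 12 ^ n)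
            = D n * (12 * Real.sqrt (6 * ε * 12 ^ n)) := by ring
          _ ≤ ((12:ℝ) ^ ((n:ℝ)^2/2) * (10:ℝ) ^ (-(n:ℝ) * s) * Δ)
              * (12 * Real.sqrt (6 * ε * 12 ^ n)) :=
            mul_le_mul_of_nonneg_right ih h12t
      have step2 : ((12:ℝ) ^ ((n:ℝ)^2/2) * (10:ℝ) ^ (-(n:ℝ) * s) * Δ)
          * (12 * Real.sqrt (6 * ε * 12 ^ n))
          ≤ ((12:ℝ) ^ ((n:ℝ)^2/2) * (10:ℝ) ^ (-(n:ℝ) * s) * Δ)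
          * ((12:ℝ) ^ ((n:ℝ) + 1/2) * (10:ℝ) ^ (-s)) :=
        mul_le_mul_of_nonneg_left (hstep n) hBpos
      have heq : ((12:ℝ) ^ ((n:ℝ)^2/2) * (10:ℝ) ^ (-(n:ℝ) * s) * Δ)
          * ((12:ℝ) ^ ((n:ℝ) + 1/2) * (10:ℝ) ^ (-s))
          = (12:ℝ) ^ ((((n:ℕ)+1 : ℕ):ℝ)^2/2) * (10:ℝ) ^ (-(((n:ℕ)+1 : ℕ):ℝ) * s) * Δ := by
        have e12 : (12:ℝ) ^ (((n:ℝ)+1)^2/2)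
            = (12:ℝ) ^ ((n:ℝ)^2/2) * (12:ℝ) ^ ((n:ℝ) + 1/2) := by
          rw [← Real.rpow_add (by norm_num : (0:ℝ) < 12)]
          congr 1
          ring
        have e10 : (10:ℝ) ^ (-((n:ℝ)+1) * s)
            = (10:ℝ) ^ (-(n:ℝ)*s) * (10:ℝ) ^ (-s) := by
          rw [← Real.rpow_add (by norm_num : (0:ℝ) < 10)]
          congr 1
          ring
        push_cast
        rw [e12, e10]
        ring
      calc D (n+1) ≤ _ := step1
        _ ≤ _ := step2
        _ = _ := heq
  intro i _ _
  exact hmain i
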